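/- Let 0 < q < 1 and let x ∈ ℂ with q < |x| < q^{−1} and x ≠ −1. Then 1 + 2x·θ'(−x;q)/θ(−x;q) = (1 − x)/(1 + x) + 2·Σ_{k=1}^∞ (−q)^k · (x^k − x^{−k})/(1 − q^k), the series converging absolutely. -/

import Mathlib

open Complex Filter Function

/-- The complex modulus, as an absolute value (port shim). -/
noncomputable def Complex.abs : AbsoluteValue ℂ ℝ := NormedField.toAbsoluteValue ℂ

lemma Complex.norm_eq_abs (z : ℂ) : ‖z‖ = Complex.abs z := rfl

@[simp] lemma Complex.abs_ofReal (r : ℝ) : Complex.abs (r : ℂ) = |r| := by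
  rw [← Complex.norm_eq_abs, Complex.norm_real, Real.norm_eq_abs]


lemma aux_norm_log_le {u : ℂ} {c ρ : ℝ} (h : ‖u‖ ≤ c) (hcρ : c ≤ ρ) (hρ : ρ < 1) :
    ‖Complex.log (1 + u)‖ ≤ (ρ * (1 - ρ)⁻¹ / 2 + 1) * c := by
  have hu1 : ‖u‖ < 1 := lt_of_le_of_lt (h.trans hcρ) hρ
  have h0 : (0:ℝ) ≤ c := le_trans (norm_nonneg u) h
  have hρ0 : (0:ℝ) ≤ ρ := le_trans h0 hcρ
  calc ‖Complex.log (1 + u)‖ ≤ ‖u‖ ^ 2 * (1 - ‖u‖)⁻¹ / 2 + ‖u‖ :=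
        Complex.norm_log_one_add_le hu1
    _ ≤ c * ρ * (1 - ρ)⁻¹ / 2 + c := by
        have hle : ‖u‖ ≤ ρ := h.trans hcρ
        have hinv : (1 - ‖u‖)⁻¹ ≤ (1 - ρ)⁻¹ := by
          apply inv_anti₀ (by linarith) (by linarith)
        have hsq : ‖u‖ ^ 2 * (1 - ‖u‖)⁻¹ ≤ (c * ρ) * (1 - ρ)⁻¹ := by
          have h1 : ‖u‖ ^ 2 ≤ c * ρ := by rw [sq]; exact mul_le_mul h hle (norm_nonneg u) h0
          have h2 : (0:ℝ) ≤ (1 - ‖u‖)⁻¹ := inv_nonneg.2 (by linarith)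
          exact mul_le_mul h1 hinv h2 (mul_nonneg h0 hρ0)
        linarith
    _ = (ρ * (1 - ρ)⁻¹ / 2 + 1) * c := by ring

lemma aux_norm_clog_le (w : ℂ) : ‖Complex.log w‖ ≤ |Real.log (Complex.abs w)| + Real.pi := by
  rw [Complex.log]
  refine (norm_add_le _ _).trans ?_
  gcongr
  · simp [Complex.norm_real]; exact le_rfl
  · rw [norm_mul]
    simp only [Complex.norm_I, mul_one, Complex.norm_real]
    simpa using Complex.abs_arg_le_pi w

lemma aux_exp_unif {ι : Type*} {p : Filter ι} {F : ι → ℂ → ℂ} {g : ℂ → ℂ} {s : Set ℂ} {M : ℝ}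
    (h : TendstoUniformlyOn F g p s) (hb : ∀ z ∈ s, ‖g z‖ ≤ M) :
    TendstoUniformlyOn (fun i z => Complex.exp (F i z)) (fun z => Complex.exp (g z)) p s := by
  rw [Metric.tendstoUniformlyOn_iff] at h ⊢
  intro ε hε
  have hM : (0:ℝ) < 2 * Real.exp M + 1 := by positivity
  have hδ : 0 < min 1 (ε / (2 * Real.exp M + 1)) := by positivity
  filter_upwards [h _ hδ] with i hi z hz
  have h1 : dist (g z) (F i z) < min 1 (ε / (2 * Real.exp M + 1)) := hi z hz
  have h2 : ‖F i z - g z‖ ≤ 1 := by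
    rw [← dist_eq_norm, dist_comm]; exact (h1.trans_le (min_le_left _ _)).le
  have key : Complex.exp (F i z) - Complex.exp (g z)
      = Complex.exp (g z) * (Complex.exp (F i z - g z) - 1) := by
    rw [mul_sub, ← Complex.exp_add]; ring_nf
  rw [dist_eq_norm, norm_sub_rev, key, norm_mul]
  have h3 : ‖Complex.exp (g z)‖ ≤ Real.exp M := by
    rw [Complex.norm_exp]
    exact Real.exp_le_exp.2 (((le_abs_self _).trans (Complex.abs_re_le_norm _)).trans (hb z hz))
  have h4 : ‖Complex.exp (F i z - g z) - 1‖ ≤ 2 * ‖F i z - g z‖ :=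
    Complex.norm_exp_sub_one_le h2
  calc ‖Complex.exp (g z)‖ * ‖Complex.exp (F i z - g z) - 1‖
      ≤ Real.exp M * (2 * ‖F i z - g z‖) := by
        exact mul_le_mul h3 h4 (norm_nonneg _) (Real.exp_nonneg M)
    _ < Real.exp M * (2 * (ε / (2 * Real.exp M + 1))) := by
        have : ‖F i z - g z‖ < ε / (2 * Real.exp M + 1) := by
          rw [← dist_eq_norm, dist_comm]; exact h1.trans_le (min_le_right _ _)
        have he : (0:ℝ) < Real.exp M := Real.exp_pos M
        gcongr
    _ = 2 * Real.exp M * ε / (2 * Real.exp M + 1) := by ring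
    _ ≤ ε := by rw [div_le_iff₀ hM]; nlinarith [Real.exp_pos M, hε.le]



/-- The infinite q-Pochhammer symbol `(a;q)_∞ = Π_{k≥0} (1 − a q^k)`. -/
noncomputable def qPoch (q : ℝ) (a : ℂ) : ℂ := ∏' k : ℕ, (1 - a * (q : ℂ) ^ k)

/-- The theta function `θ(x;q) = (x;q)_∞ (q/x;q)_∞`. -/
noncomputable def theta (q : ℝ) (x : ℂ) : ℂ := qPoch q x * qPoch q ((q : ℂ) / x)

/-- For `q < |x| < q⁻¹`, `x ≠ −1`:
`1 + 2x θ'(−x;q)/θ(−x;q) = (1−x)/(1+x) + 2 Σ_{k≥1} (−q)^k (x^k − x^{−k})/(1−q^k)`,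
the series converging absolutely. -/

lemma aux_hasSum_logDeriv (q : ℝ) (hq0 : 0 < q) (hq1 : q < 1) (y : ℂ)
    (h1 : q < Complex.abs y) (h2 : Complex.abs y < q⁻¹) (hy1 : y ≠ 1) :
    theta q y ≠ 0 ∧
    HasSum (fun k : ℕ => -((q:ℂ)^k) / (1 - y*(q:ℂ)^k)
        + ((q:ℂ) * (y^2)⁻¹ * (q:ℂ)^k) / (1 - (q:ℂ) * y⁻¹ * (q:ℂ)^k))
      (deriv (theta q) y / theta q y) := by
  have hQabs : ∀ k : ℕ, Complex.abs ((q:ℂ)^k) = q^k := by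
    intro k; rw [map_pow, Complex.abs_ofReal, abs_of_pos hq0]
  have hy0 : y ≠ 0 := by
    intro h; rw [h] at h1; simp at h1; linarith
  set a : ℝ := (q + Complex.abs y)/2 with ha_def
  set b : ℝ := (Complex.abs y + q⁻¹)/2 with hb_def
  set δ : ℝ := Complex.abs (y - 1)/2 with hδ_def
  have hδ0 : 0 < δ := by
    have : y - 1 ≠ 0 := sub_ne_zero.2 hy1
    have := Complex.abs.pos this
    positivity
  set ε : ℝ := min (min ((Complex.abs y - q)/2) ((q⁻¹ - Complex.abs y)/2)) δ with hε_def
  have hε0 : 0 < ε := by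
    apply lt_min (lt_min (by linarith) (by linarith)) hδ0
  set U : Set ℂ := Metric.ball y ε with hU_def
  have hyU : y ∈ U := Metric.mem_ball_self hε0
  have haq : q < a := by simp only [ha_def]; linarith
  have ha0 : 0 < a := lt_trans hq0 haq
  have hbq : b * q < 1 := by
    have hb2 : b < q⁻¹ := by simp only [hb_def]; linarith
    calc b * q < q⁻¹ * q := by gcongr
      _ = 1 := inv_mul_cancel₀ (ne_of_gt hq0)
  have hb0 : 0 < b := by
    have : 0 < Complex.abs y := lt_trans hq0 h1
    have : 0 < q⁻¹ := inv_pos.2 hq0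
    simp only [hb_def]; linarith
  have hqa : q / a < 1 := (div_lt_one ha0).2 haq
  have hqa0 : 0 < q / a := div_pos hq0 ha0
  -- membership facts
  have hmem : ∀ z ∈ U, a ≤ Complex.abs z ∧ Complex.abs z ≤ b ∧ δ ≤ Complex.abs (z - 1) := by
    intro z hz
    rw [hU_def, Metric.mem_ball, Complex.dist_eq, Complex.norm_eq_abs] at hz
    have e1 : ε ≤ (Complex.abs y - q)/2 := le_trans (min_le_left _ _) (min_le_left _ _)
    have e2 : ε ≤ (q⁻¹ - Complex.abs y)/2 := le_trans (min_le_left _ _) (min_le_right _ _)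
    have e3 : ε ≤ δ := min_le_right _ _
    have t1 : Complex.abs y - Complex.abs z ≤ Complex.abs (z - y) := by
      simpa only [← Complex.norm_eq_abs, norm_sub_rev z y] using norm_sub_norm_le y z
    have t2 : Complex.abs z - Complex.abs y ≤ Complex.abs (z - y) := by
      simpa only [← Complex.norm_eq_abs] using norm_sub_norm_le z y
    have t3 : Complex.abs (y - 1) - Complex.abs (z - 1) ≤ Complex.abs (z - y) := by
      have := norm_sub_norm_le (y-1) (z-1)
      have e : (y-1) - (z-1) = -(z - y) := by ring
      rw [e, norm_neg] at this
      simpa only [← Complex.norm_eq_abs] using this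
    refine ⟨by simp only [ha_def]; linarith, by simp only [hb_def]; linarith, ?_⟩
    have : 2*δ = Complex.abs (y-1) := by simp [hδ_def]; ring
    linarith
  have hz0 : ∀ z ∈ U, z ≠ 0 := by
    intro z hz h0
    obtain ⟨hA, _, _⟩ := hmem z hz
    rw [h0] at hA; simp at hA; linarith
  -- nonvanishing of factors
  have hf1 : ∀ z ∈ U, ∀ k : ℕ, (1 : ℂ) - z*(q:ℂ)^k ≠ 0 := by
    intro z hz k
    obtain ⟨hA, hB, hD⟩ := hmem z hz
    match k with
    | 0 =>
      intro h
      have : z = 1 := by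
        have := sub_eq_zero.1 h
        simpa using this.symm
      rw [this] at hD; simp at hD; linarith
    | (k+1) =>
      intro h
      have h' : Complex.abs (z * (q:ℂ)^(k+1)) = 1 := by
        have := congrArg Complex.abs (sub_eq_zero.1 h)
        simpa using this.symm
      rw [map_mul, hQabs] at h'
      have hq' : q^(k+1) ≤ q := by
        calc q^(k+1) = q^k * q := by ring
          _ ≤ 1 * q := by
              apply mul_le_mul_of_nonneg_right _ (le_of_lt hq0)
              exact pow_le_one₀ (le_of_lt hq0) (le_of_lt hq1)
          _ = q := one_mul q
      have : Complex.abs z * q^(k+1) ≤ b * q := by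
        apply mul_le_mul hB hq' (by positivity) (le_of_lt hb0)
      linarith
  have hf2 : ∀ z ∈ U, ∀ k : ℕ, (1 : ℂ) - (q:ℂ)*z⁻¹*(q:ℂ)^k ≠ 0 := by
    intro z hz k
    obtain ⟨hA, hB, hD⟩ := hmem z hz
    intro h
    have h' : Complex.abs ((q:ℂ)*z⁻¹*(q:ℂ)^k) = 1 := by
      have := congrArg Complex.abs (sub_eq_zero.1 h)
      simpa using this.symm
    rw [map_mul, map_mul, hQabs, map_inv₀, Complex.abs_ofReal, abs_of_pos hq0] at h'
    have hA0 : 0 < Complex.abs z := lt_of_lt_of_le ha0 hA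
    have : q * (Complex.abs z)⁻¹ * q^k ≤ (q/a) * 1 := by
      have i1 : (Complex.abs z)⁻¹ ≤ a⁻¹ := by
        apply inv_anti₀ ha0 hA
      have i2 : q^k ≤ 1 := pow_le_one₀ (le_of_lt hq0) (le_of_lt hq1)
      calc q * (Complex.abs z)⁻¹ * q^k ≤ q * a⁻¹ * 1 := by
            apply mul_le_mul (by apply mul_le_mul_of_nonneg_left i1 (le_of_lt hq0)) i2
              (by positivity) (by positivity)
        _ = (q/a) * 1 := by rw [div_eq_mul_inv]
    rw [h'] at this
    linarith
  -- log bounds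
  set ρ : ℝ := max (b*q) (q/a) with hρ_def
  have hρ1 : ρ < 1 := max_lt hbq hqa
  have hρnn : 0 ≤ ρ := le_trans (le_of_lt hqa0) (le_max_right _ _)
  set K : ℝ := ρ * (1-ρ)⁻¹ / 2 + 1 with hK_def
  have hK0 : 0 < K := by
    have : 0 ≤ ρ * (1-ρ)⁻¹ := mul_nonneg hρnn (inv_nonneg.2 (by linarith))
    simp only [hK_def]; linarith
  have hqpow1 : ∀ k : ℕ, q ^ k ≤ 1 := fun k => pow_le_one₀ (le_of_lt hq0) (le_of_lt hq1)
  have hqpow : ∀ k : ℕ, 1 ≤ k → q ^ k ≤ q := by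
    intro k hk
    calc q ^ k ≤ q ^ 1 := pow_le_pow_of_le_one (le_of_lt hq0) (le_of_lt hq1) hk
      _ = q := pow_one q
  have hlog1 : ∀ z ∈ U, ∀ k : ℕ, 1 ≤ k → ‖Complex.log (1 - z*(q:ℂ)^k)‖ ≤ K * (b * q^k) := by
    intro z hz k hk
    obtain ⟨hA, hB, _⟩ := hmem z hz
    have hnorm : ‖-(z*(q:ℂ)^k)‖ ≤ b * q^k := by
      rw [norm_neg, norm_mul, Complex.norm_eq_abs, Complex.norm_eq_abs, hQabs]
      exact mul_le_mul_of_nonneg_right hB (by positivity)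
    have hcρ : b * q^k ≤ ρ := by
      calc b * q^k ≤ b * q := mul_le_mul_of_nonneg_left (hqpow k hk) (le_of_lt hb0)
        _ ≤ ρ := le_max_left _ _
    have := aux_norm_log_le hnorm hcρ hρ1
    rw [← sub_eq_add_neg] at this
    exact this
  have hlog2 : ∀ z ∈ U, ∀ k : ℕ, ‖Complex.log (1 - (q:ℂ)*z⁻¹*(q:ℂ)^k)‖ ≤ K * ((q/a) * q^k) := by
    intro z hz k
    obtain ⟨hA, hB, _⟩ := hmem z hz
    have hA0 : 0 < Complex.abs z := lt_of_lt_of_le ha0 hA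
    have hnorm : ‖-((q:ℂ)*z⁻¹*(q:ℂ)^k)‖ ≤ (q/a) * q^k := by
      rw [norm_neg, norm_mul, norm_mul, norm_inv, Complex.norm_eq_abs, Complex.norm_eq_abs,
        Complex.norm_eq_abs, hQabs, Complex.abs_ofReal, abs_of_pos hq0]
      have : (Complex.abs z)⁻¹ ≤ a⁻¹ := inv_anti₀ ha0 hA
      calc q * (Complex.abs z)⁻¹ * q^k ≤ q * a⁻¹ * q^k := by
            apply mul_le_mul_of_nonneg_right _ (by positivity)
            exact mul_le_mul_of_nonneg_left this (le_of_lt hq0)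
        _ = (q/a) * q^k := by rw [div_eq_mul_inv]
    have hcρ : (q/a) * q^k ≤ ρ := by
      calc (q/a) * q^k ≤ (q/a) * 1 := mul_le_mul_of_nonneg_left (hqpow1 k) (le_of_lt hqa0)
        _ = q/a := mul_one _
        _ ≤ ρ := le_max_right _ _
    have := aux_norm_log_le hnorm hcρ hρ1
    rw [← sub_eq_add_neg] at this
    exact this
  -- the log-sum family
  set L : ℕ → ℂ → ℂ := fun k z =>
    Complex.log (1 - z*(q:ℂ)^k) + Complex.log (1 - (q:ℂ)*z⁻¹*(q:ℂ)^k) with hL_def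
  set u : ℕ → ℝ := fun k => K * (b + q/a) * q^k with hu_def
  have hu : Summable u := (summable_geometric_of_lt_one (le_of_lt hq0) hq1).mul_left _
  have hucof : ∀ᶠ k in cofinite, ∀ z ∈ U, ‖L k z‖ ≤ u k := by
    rw [Nat.cofinite_eq_atTop, eventually_atTop]
    refine ⟨1, fun k hk z hz => ?_⟩
    calc ‖L k z‖ ≤ ‖Complex.log (1 - z*(q:ℂ)^k)‖ + ‖Complex.log (1 - (q:ℂ)*z⁻¹*(q:ℂ)^k)‖ :=
          norm_add_le _ _
      _ ≤ K * (b * q^k) + K * ((q/a) * q^k) := add_le_add (hlog1 z hz k hk) (hlog2 z hz k)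
      _ = u k := by simp only [hu_def]; ring
  -- pointwise summability of the logs
  have hs1 : ∀ z ∈ U, Summable (fun k : ℕ => Complex.log (1 - z*(q:ℂ)^k)) := by
    intro z hz
    rw [← summable_nat_add_iff 1]
    apply Summable.of_norm_bounded (g := fun k : ℕ => (K * (b*q)) * q^k)
      (((summable_geometric_of_lt_one (le_of_lt hq0) hq1).mul_left _))
    intro k
    calc ‖Complex.log (1 - z*(q:ℂ)^(k+1))‖ ≤ K * (b * q^(k+1)) :=
          hlog1 z hz (k+1) (Nat.le_add_left 1 k)
      _ = (K * (b*q)) * q^k := by ring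
  have hs2 : ∀ z ∈ U, Summable (fun k : ℕ => Complex.log (1 - (q:ℂ)*z⁻¹*(q:ℂ)^k)) := by
    intro z hz
    apply Summable.of_norm_bounded (g := fun k : ℕ => (K * (q/a)) * q^k)
      (((summable_geometric_of_lt_one (le_of_lt hq0) hq1).mul_left _))
    intro k
    calc ‖Complex.log (1 - (q:ℂ)*z⁻¹*(q:ℂ)^k)‖ ≤ K * ((q/a) * q^k) := hlog2 z hz k
      _ = (K * (q/a)) * q^k := by ring
  -- limit function
  set G : ℂ → ℂ := fun z => (∑' k : ℕ, Complex.log (1 - z*(q:ℂ)^k))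
      + ∑' k : ℕ, Complex.log (1 - (q:ℂ)*z⁻¹*(q:ℂ)^k) with hG_def
  have hTU : TendstoUniformlyOn (fun (t : Finset ℕ) z => ∑ k ∈ t, L k z) G atTop U := by
    have h0 := tendstoUniformlyOn_tsum_of_cofinite_eventually hu hucof
    apply h0.congr_right
    intro z hz
    simp only [hL_def, hG_def]
    exact Summable.tsum_add (hs1 z hz) (hs2 z hz)
  -- bound on ‖G‖ over U
  set C₀ : ℝ := |Real.log δ| + |Real.log (1+b)| + Real.pi with hC₀_def
  have hT : ∀ r : ℝ, 0 ≤ r → ∑' k : ℕ, r * q^k = r * (1-q)⁻¹ := by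
    intro r _
    rw [tsum_mul_left, tsum_geometric_of_lt_one (le_of_lt hq0) hq1]
  set M : ℝ := C₀ + (K*(b*q)) * (1-q)⁻¹ + (K*(q/a)) * (1-q)⁻¹ with hM_def
  have hMbound : ∀ z ∈ U, ‖G z‖ ≤ M := by
    intro z hz
    obtain ⟨hA, hB, hD⟩ := hmem z hz
    have hgeo : Summable (fun k : ℕ => q ^ k) := summable_geometric_of_lt_one (le_of_lt hq0) hq1
    -- first tsum split
    have hns1 : Summable (fun k : ℕ => ‖Complex.log (1 - z*(q:ℂ)^(k+1))‖) := by
      apply Summable.of_nonneg_of_le (fun k => norm_nonneg _)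
        (fun k => (hlog1 z hz (k+1) (Nat.le_add_left 1 k)).trans (le_of_eq (by ring)))
        (hgeo.mul_left (K*(b*q)))
    have hns2 : Summable (fun k : ℕ => ‖Complex.log (1 - (q:ℂ)*z⁻¹*(q:ℂ)^k)‖) := by
      apply Summable.of_nonneg_of_le (fun k => norm_nonneg _)
        (fun k => (hlog2 z hz k).trans (le_of_eq (by ring))) (hgeo.mul_left (K*(q/a)))
    have t1 : ‖∑' k : ℕ, Complex.log (1 - z*(q:ℂ)^k)‖ ≤ C₀ + (K*(b*q)) * (1-q)⁻¹ := by
      rw [Summable.tsum_eq_zero_add (hs1 z hz)]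
      refine (norm_add_le _ _).trans (add_le_add ?_ ?_)
      · -- ‖log (1 - z)‖ ≤ C₀
        have h0 : (1:ℂ) - z*(q:ℂ)^0 = 1 - z := by simp
        rw [h0]
        refine (aux_norm_clog_le (1 - z)).trans ?_
        have habs1 : δ ≤ Complex.abs (1 - z) := by
          have : Complex.abs (1 - z) = Complex.abs (z - 1) := by
            rw [← Complex.abs.map_neg]; ring_nf
          rw [this]; exact hD
        have habs2 : Complex.abs (1 - z) ≤ 1 + b := by
          calc Complex.abs (1 - z) ≤ Complex.abs 1 + Complex.abs z := by
                simpa [sub_eq_add_neg] using Complex.abs.add_le 1 (-z)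
            _ ≤ 1 + b := by simp; exact hB
        have hlogle : |Real.log (Complex.abs (1 - z))| ≤ |Real.log δ| + |Real.log (1+b)| := by
          have l1 : Real.log δ ≤ Real.log (Complex.abs (1 - z)) :=
            Real.log_le_log hδ0 habs1
          have l2 : Real.log (Complex.abs (1 - z)) ≤ Real.log (1+b) :=
            Real.log_le_log (lt_of_lt_of_le hδ0 habs1) habs2
          rw [abs_le]
          constructor
          · linarith [neg_abs_le (Real.log δ), abs_nonneg (Real.log (1+b))]
          · linarith [le_abs_self (Real.log (1+b)), abs_nonneg (Real.log δ)]
        simp only [hC₀_def]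
        linarith
      · -- tail
        refine (norm_tsum_le_tsum_norm hns1).trans ?_
        rw [← hT (K*(b*q)) (mul_nonneg (le_of_lt hK0) (mul_nonneg (le_of_lt hb0) (le_of_lt hq0)))]
        apply Summable.tsum_le_tsum _ hns1 (hgeo.mul_left (K*(b*q)))
        intro k
        exact (hlog1 z hz (k+1) (Nat.le_add_left 1 k)).trans (le_of_eq (by ring))
    have t2 : ‖∑' k : ℕ, Complex.log (1 - (q:ℂ)*z⁻¹*(q:ℂ)^k)‖ ≤ (K*(q/a)) * (1-q)⁻¹ := by
      refine (norm_tsum_le_tsum_norm hns2).trans ?_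
      rw [← hT (K*(q/a)) (mul_nonneg (le_of_lt hK0) (le_of_lt hqa0))]
      apply Summable.tsum_le_tsum _ hns2 (hgeo.mul_left (K*(q/a)))
      intro k
      exact (hlog2 z hz k).trans (le_of_eq (by ring))
    simp only [hG_def, hM_def]
    calc ‖(∑' k : ℕ, Complex.log (1 - z*(q:ℂ)^k))
        + ∑' k : ℕ, Complex.log (1 - (q:ℂ)*z⁻¹*(q:ℂ)^k)‖
        ≤ ‖∑' k : ℕ, Complex.log (1 - z*(q:ℂ)^k)‖
          + ‖∑' k : ℕ, Complex.log (1 - (q:ℂ)*z⁻¹*(q:ℂ)^k)‖ := norm_add_le _ _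
      _ ≤ (C₀ + (K*(b*q)) * (1-q)⁻¹) + (K*(q/a)) * (1-q)⁻¹ := add_le_add t1 t2
      _ = C₀ + (K*(b*q)) * (1-q)⁻¹ + (K*(q/a)) * (1-q)⁻¹ := by ring
  -- theta = exp ∘ G on U
  have e1 : (Complex.exp ∘ fun (z : U) => ∑' k : ℕ, Complex.log (1 - (z:ℂ)*(q:ℂ)^k))
      = fun (z : U) => ∏' k : ℕ, (1 - (z:ℂ)*(q:ℂ)^k) :=
    funext fun z => Complex.cexp_tsum_eq_tprod (fun k => hf1 z z.2 k) (hs1 z z.2)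
  have e2 : (Complex.exp ∘ fun (z : U) => ∑' k : ℕ, Complex.log (1 - (q:ℂ)*(z:ℂ)⁻¹*(q:ℂ)^k))
      = fun (z : U) => ∏' k : ℕ, (1 - (q:ℂ)*(z:ℂ)⁻¹*(q:ℂ)^k) :=
    funext fun z => Complex.cexp_tsum_eq_tprod (fun k => hf2 z z.2 k) (hs2 z z.2)
  have hθeq : ∀ z ∈ U, theta q z = Complex.exp (G z) := by
    intro z hz
    have h1' := congrFun e1 ⟨z, hz⟩
    have h2' := congrFun e2 ⟨z, hz⟩
    simp only [comp_apply] at h1' h2'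
    have hp1 : qPoch q z = ∏' k : ℕ, (1 - z*(q:ℂ)^k) := rfl
    have hp2 : qPoch q ((q:ℂ)/z) = ∏' k : ℕ, (1 - (q:ℂ)*z⁻¹*(q:ℂ)^k) := by
      apply tprod_congr
      intro k
      rw [div_eq_mul_inv]
    rw [theta, hp1, hp2, ← h1', ← h2', hG_def, Complex.exp_add]
  have hθ0 : theta q y ≠ 0 := by
    rw [hθeq y hyU]; exact Complex.exp_ne_zero _
  -- partial products
  set P : Finset ℕ → ℂ → ℂ :=
    fun t z => ∏ k ∈ t, ((1 - z*(q:ℂ)^k) * (1 - (q:ℂ)*z⁻¹*(q:ℂ)^k)) with hP_def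
  have hPexp : ∀ t : Finset ℕ, ∀ z ∈ U, P t z = Complex.exp (∑ k ∈ t, L k z) := by
    intro t z hz
    rw [Complex.exp_sum]
    apply Finset.prod_congr rfl
    intro k _
    rw [hL_def, Complex.exp_add, Complex.exp_log (hf1 z hz k), Complex.exp_log (hf2 z hz k)]
  have hTUP : TendstoUniformlyOn P (theta q) atTop U := by
    have h0 := (aux_exp_unif hTU hMbound).congr
      (Eventually.of_forall (fun t z hz => (hPexp t z hz).symm))
    exact h0.congr_right (fun z hz => (hθeq z hz).symm)
  have hdiffP : ∀ t : Finset ℕ, DifferentiableOn ℂ (P t) U := by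
    intro t
    apply DifferentiableOn.fun_finsetProd
    intro k _
    have d1 : DifferentiableOn ℂ (fun z : ℂ => 1 - z*(q:ℂ)^k) U :=
      (differentiableOn_const 1).sub (differentiableOn_id.mul (differentiableOn_const _))
    have d2 : DifferentiableOn ℂ (fun z : ℂ => 1 - (q:ℂ)*z⁻¹*(q:ℂ)^k) U := by
      refine (differentiableOn_const 1).sub (DifferentiableOn.mul ?_ (differentiableOn_const _))
      exact (differentiableOn_const _).mul (differentiableOn_id.inv (fun z hz => hz0 z hz))
    exact d1.mul d2
  -- apply the logarithmic-derivative limit theorem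
  have hlogd := logDeriv_tendsto (f := P) (g := theta q) Metric.isOpen_ball hyU
    hTUP.tendstoLocallyUniformlyOn (Eventually.of_forall hdiffP) hθ0
  -- identify logDeriv of partial products
  have hd1 : ∀ k : ℕ, HasDerivAt (fun z : ℂ => 1 - z*(q:ℂ)^k) (-((q:ℂ)^k)) y := by
    intro k
    have := ((hasDerivAt_id y).mul_const ((q:ℂ)^k)).const_sub 1
    simpa using this
  have hd2 : ∀ k : ℕ, HasDerivAt (fun z : ℂ => 1 - (q:ℂ)*z⁻¹*(q:ℂ)^k)
      ((q:ℂ)*(y^2)⁻¹*(q:ℂ)^k) y := by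
    intro k
    have := (((hasDerivAt_inv hy0).const_mul (q:ℂ)).mul_const ((q:ℂ)^k)).const_sub 1
    have e : -((q:ℂ) * -(y^2)⁻¹ * (q:ℂ)^k) = (q:ℂ)*(y^2)⁻¹*(q:ℂ)^k := by ring
    rwa [e] at this
  have hPld : ∀ t : Finset ℕ, logDeriv (P t) y = ∑ k ∈ t,
      (-((q:ℂ)^k) / (1 - y*(q:ℂ)^k)
        + ((q:ℂ) * (y^2)⁻¹ * (q:ℂ)^k) / (1 - (q:ℂ) * y⁻¹ * (q:ℂ)^k)) := by
    intro t
    have hne : ∀ k ∈ t,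
        (fun z : ℂ => (1 - z*(q:ℂ)^k) * (1 - (q:ℂ)*z⁻¹*(q:ℂ)^k)) y ≠ 0 :=
      fun k _ => mul_ne_zero (hf1 y hyU k) (hf2 y hyU k)
    have hdf : ∀ k ∈ t, DifferentiableAt ℂ
        (fun z : ℂ => (1 - z*(q:ℂ)^k) * (1 - (q:ℂ)*z⁻¹*(q:ℂ)^k)) y :=
      fun k _ => ((hd1 k).differentiableAt.mul (hd2 k).differentiableAt)
    have h0 := logDeriv_prod (s := t)
      (f := fun k (z : ℂ) => (1 - z*(q:ℂ)^k) * (1 - (q:ℂ)*z⁻¹*(q:ℂ)^k)) (x := y) hne hdf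
    refine h0.trans ?_
    apply Finset.sum_congr rfl
    intro k _
    rw [logDeriv_mul y (hf1 y hyU k) (hf2 y hyU k) (hd1 k).differentiableAt
      (hd2 k).differentiableAt]
    rw [logDeriv_apply, logDeriv_apply, (hd1 k).deriv, (hd2 k).deriv]
  have hsum : HasSum (fun k : ℕ => -((q:ℂ)^k) / (1 - y*(q:ℂ)^k)
      + ((q:ℂ) * (y^2)⁻¹ * (q:ℂ)^k) / (1 - (q:ℂ) * y⁻¹ * (q:ℂ)^k))
      (logDeriv (theta q) y) := by
    rw [HasSum]
    exact Tendsto.congr (fun t => hPld t) hlogd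
  exact ⟨hθ0, by rw [← logDeriv_apply]; exact hsum⟩

lemma aux_geom_shift {t : ℂ} (ht : ‖t‖ < 1) :
    HasSum (fun n : ℕ => t^(n+1)) (t * (1-t)⁻¹) := by
  have h0 := (hasSum_geometric_of_norm_lt_one ht).mul_left t
  have he : (fun n : ℕ => t * t^n) = fun n : ℕ => t^(n+1) := funext fun n => by ring
  rwa [he] at h0

theorem laurent_expansion_odd (q : ℝ) (hq0 : 0 < q) (hq1 : q < 1) (x : ℂ)
    (hx1 : q < ‖x‖) (hx2 : ‖x‖ < q⁻¹) (hxm : x ≠ -1) :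
    Summable (fun k : ℕ =>
      (-(q : ℂ)) ^ (k + 1) * (x ^ (k + 1) - x ^ (-((k : ℤ) + 1))) / (1 - (q : ℂ) ^ (k + 1))) ∧
    1 + 2 * x * deriv (theta q) (-x) / theta q (-x) =
      (1 - x) / (1 + x) +
        2 * ∑' k : ℕ,
          (-(q : ℂ)) ^ (k + 1) * (x ^ (k + 1) - x ^ (-((k : ℤ) + 1))) /
            (1 - (q : ℂ) ^ (k + 1)) := by
  have hQabs : ∀ k : ℕ, Complex.abs ((q:ℂ)^k) = q^k := by
    intro k; rw [map_pow, Complex.abs_ofReal, abs_of_pos hq0]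
  rw [Complex.norm_eq_abs] at hx1 hx2
  set X : ℝ := Complex.abs x with hX_def
  have hX0 : 0 < X := lt_trans hq0 hx1
  have hx0 : x ≠ 0 := by
    intro h
    rw [hX_def, h, map_zero] at hX0
    exact lt_irrefl 0 hX0
  have hXq : X * q < 1 := by
    calc X * q < q⁻¹ * q := by gcongr
      _ = 1 := inv_mul_cancel₀ (ne_of_gt hq0)
  have hqX : q * X⁻¹ < 1 := by
    rw [mul_comm, ← div_eq_inv_mul]
    exact (div_lt_one hX0).2 hx1
  have hqpow1 : ∀ k : ℕ, q ^ k ≤ 1 := fun k => pow_le_one₀ (le_of_lt hq0) (le_of_lt hq1)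
  have hqpow : ∀ k : ℕ, 1 ≤ k → q ^ k ≤ q := by
    intro k hk
    calc q ^ k ≤ q ^ 1 := pow_le_pow_of_le_one (le_of_lt hq0) (le_of_lt hq1) hk
      _ = q := pow_one q
  have hxm1 : (1:ℂ) + x ≠ 0 := by
    intro h; apply hxm
    have : x = -1 := by linear_combination h
    exact this
  have hden1 : ∀ k : ℕ, (1:ℂ) + x*(q:ℂ)^k ≠ 0 := by
    intro k
    match k with
    | 0 => simpa using hxm1
    | (k+1) =>
      intro h
      have h' : Complex.abs (x * (q:ℂ)^(k+1)) = 1 := by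
        have : x * (q:ℂ)^(k+1) = -1 := by linear_combination h
        rw [this]; simp
      rw [map_mul, hQabs] at h'
      have : X * q^(k+1) ≤ X * q :=
        mul_le_mul_of_nonneg_left (hqpow (k+1) (Nat.le_add_left 1 k)) (le_of_lt hX0)
      rw [h'] at this
      linarith
  have hden2 : ∀ k : ℕ, x + (q:ℂ)^(k+1) ≠ 0 := by
    intro k h
    have h' : Complex.abs x = q^(k+1) := by
      have hxe : x = -(q:ℂ)^(k+1) := by linear_combination h
      rw [hxe, Complex.abs.map_neg, hQabs]
    have : q ^ (k+1) ≤ q := hqpow (k+1) (Nat.le_add_left 1 k)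
    rw [← h'] at this
    simp only [← hX_def] at this
    linarith
  have hden2' : ∀ k : ℕ, (1:ℂ) + (q:ℂ)*x⁻¹*(q:ℂ)^k ≠ 0 := by
    intro k h
    apply hden2 k
    have : x * (1 + (q:ℂ)*x⁻¹*(q:ℂ)^k) = x + (q:ℂ)^(k+1) := by
      field_simp; ring
    rw [h, mul_zero] at this
    exact this.symm
  have hden3 : ∀ n : ℕ, (1:ℂ) - (q:ℂ)^(n+1) ≠ 0 := by
    intro n h
    have h' : Complex.abs ((q:ℂ)^(n+1)) = 1 := by
      have : (q:ℂ)^(n+1) = 1 := by linear_combination -h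
      rw [this]; simp
    rw [hQabs] at h'
    have : q^(n+1) ≤ q := hqpow (n+1) (Nat.le_add_left 1 n)
    rw [h'] at this; linarith
  -- the main analytic input
  have hy1 : -x ≠ 1 := by
    intro h; apply hxm; linear_combination -h
  obtain ⟨hθ0, hsum⟩ := aux_hasSum_logDeriv q hq0 hq1 (-x) (by simpa using hx1)
    (by simpa using hx2) hy1
  -- series definitions
  set d : ℕ → ℂ := fun k => (-2)*x*(q:ℂ)^k * (1+x*(q:ℂ)^k)⁻¹ with hd_def
  set e : ℕ → ℂ := fun k => 2*(q:ℂ)^(k+1) * (x+(q:ℂ)^(k+1))⁻¹ with he_def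
  set w : ℕ → ℂ := fun k => (-(q : ℂ)) ^ (k + 1) * (x ^ (k + 1) - x ^ (-((k : ℤ) + 1))) /
      (1 - (q : ℂ) ^ (k + 1)) with hw_def
  set F : ℕ × ℕ → ℂ := fun p =>
    2 * ((-(x*(q:ℂ)^(p.1+1)))^(p.2+1) - (-(x⁻¹*(q:ℂ)^(p.1+1)))^(p.2+1)) with hF_def
  set r : ℝ := max X X⁻¹ with hr_def
  have hr0 : 0 < r := lt_of_lt_of_le hX0 (le_max_left _ _)
  set s0 : ℝ := q * r with hs0_def
  have hs00 : 0 < s0 := mul_pos hq0 hr0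
  have hs01 : s0 < 1 := by
    rw [hs0_def, hr_def, mul_comm]
    rw [max_mul_of_nonneg _ _ (le_of_lt hq0)]
    apply max_lt
    · exact hXq
    · rw [mul_comm]; exact hqX
  have hgeoq : Summable (fun m : ℕ => q ^ m) := summable_geometric_of_lt_one (le_of_lt hq0) hq1
  have hgeos : Summable (fun n : ℕ => s0 ^ n) := summable_geometric_of_lt_one (le_of_lt hs00) hs01
  -- summability of F
  have hFbound : ∀ p : ℕ × ℕ, ‖F p‖ ≤ (4*s0) * (q^p.1 * s0^p.2) := by
    rintro ⟨m, n⟩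
    have key : ∀ u : ℂ, Complex.abs u ≤ r →
        ‖(-(u*(q:ℂ)^(m+1)))^(n+1)‖ ≤ s0 * (q^m * s0^n) := by
      intro u hu
      rw [norm_pow, norm_neg, norm_mul, Complex.norm_eq_abs, Complex.norm_eq_abs, hQabs]
      have h1 : Complex.abs u * q^(m+1) ≤ s0 * q^m := by
        calc Complex.abs u * q^(m+1) = (Complex.abs u * q) * q^m := by ring
          _ ≤ (r * q) * q^m := by
              apply mul_le_mul_of_nonneg_right _ (by positivity)
              exact mul_le_mul_of_nonneg_right hu (le_of_lt hq0)
          _ = s0 * q^m := by rw [hs0_def]; ring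
      calc (Complex.abs u * q^(m+1))^(n+1) ≤ (s0 * q^m)^(n+1) := by
            apply pow_le_pow_left₀ (by positivity) h1
        _ = (s0 * q^m) * (s0 * q^m)^n := by ring
        _ ≤ (s0 * q^m) * s0^n := by
            apply mul_le_mul_of_nonneg_left _ (by positivity)
            apply pow_le_pow_left₀ (by positivity)
            calc s0 * q^m ≤ s0 * 1 := by
                  apply mul_le_mul_of_nonneg_left (hqpow1 m) (le_of_lt hs00)
              _ = s0 := mul_one s0
        _ = s0 * (q^m * s0^n) := by ring
    have hXr : X ≤ r := le_max_left _ _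
    have hXir : X⁻¹ ≤ r := le_max_right _ _
    calc ‖F (m,n)‖ ≤ 2 * (‖(-(x*(q:ℂ)^(m+1)))^(n+1)‖ + ‖(-(x⁻¹*(q:ℂ)^(m+1)))^(n+1)‖) := by
          rw [hF_def]
          simp only [norm_mul, Complex.norm_ofNat]
          apply mul_le_mul_of_nonneg_left _ (by norm_num)
          exact norm_sub_le _ _
      _ ≤ 2 * (s0 * (q^m * s0^n) + s0 * (q^m * s0^n)) := by
          apply mul_le_mul_of_nonneg_left _ (by norm_num)
          apply add_le_add (key x hXr)
          apply key x⁻¹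
          rw [map_inv₀]; exact hXir
      _ = (4*s0) * (q^m * s0^n) := by ring
  have hFsummable : Summable F := by
    apply Summable.of_norm
    apply Summable.of_nonneg_of_le (fun p => norm_nonneg _) hFbound
    exact (Summable.mul_of_nonneg hgeoq hgeos (fun m => by positivity)
      (fun n => by positivity)).mul_left (4*s0)
  -- row sums
  have hrow : ∀ m : ℕ, HasSum (fun n => F (m, n)) (d (m+1) + e m) := by
    intro m
    have ht1 : ‖-(x*(q:ℂ)^(m+1))‖ < 1 := by
      rw [norm_neg, norm_mul, Complex.norm_eq_abs, Complex.norm_eq_abs, hQabs]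
      calc X * q^(m+1) ≤ X * q :=
            mul_le_mul_of_nonneg_left (hqpow (m+1) (Nat.le_add_left 1 m)) (le_of_lt hX0)
        _ < 1 := hXq
    have ht2 : ‖-(x⁻¹*(q:ℂ)^(m+1))‖ < 1 := by
      rw [norm_neg, norm_mul, Complex.norm_eq_abs, Complex.norm_eq_abs, hQabs, map_inv₀]
      calc X⁻¹ * q^(m+1) ≤ X⁻¹ * q := by
            apply mul_le_mul_of_nonneg_left (hqpow (m+1) (Nat.le_add_left 1 m))
            positivity
        _ < 1 := by rw [mul_comm]; exact hqX
    have hden2'' : (1:ℂ) + x⁻¹*(q:ℂ)^(m+1) ≠ 0 := by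
      intro h; apply hden2' m; rw [← h]; ring
    have h1 := aux_geom_shift ht1
    have h2 := aux_geom_shift ht2
    have hs := (h1.sub h2).mul_left 2
    have hval : 2*((-(x*(q:ℂ)^(m+1)) * (1 - -(x*(q:ℂ)^(m+1)))⁻¹)
        - (-(x⁻¹*(q:ℂ)^(m+1)) * (1 - -(x⁻¹*(q:ℂ)^(m+1)))⁻¹)) = d (m+1) + e m := by
      have n1 := hden1 (m+1)
      have n3 := hden2 m
      have k1 : (1:ℂ) - -(x*(q:ℂ)^(m+1)) = 1 + x*(q:ℂ)^(m+1) := by ring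
      have k2 : (1:ℂ) - -(x⁻¹*(q:ℂ)^(m+1)) = 1 + x⁻¹*(q:ℂ)^(m+1) := by ring
      rw [hd_def, he_def, k1, k2]
      field_simp
      ring
    rw [hval] at hs
    exact hs
  -- column sums
  have hcol : ∀ n : ℕ, HasSum (fun m => F (m, n)) (2 * w n) := by
    intro n
    have hQn : ‖(q:ℂ)^(n+1)‖ < 1 := by
      rw [Complex.norm_eq_abs, hQabs]
      exact lt_of_le_of_lt (hqpow (n+1) (Nat.le_add_left 1 n)) hq1
    have hg := (aux_geom_shift hQn).mul_left (2*((-x)^(n+1) - (-x⁻¹)^(n+1)))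
    have hfun : (fun m : ℕ => 2*((-x)^(n+1) - (-x⁻¹)^(n+1)) * ((q:ℂ)^(n+1))^(m+1))
        = fun m => F (m, n) := by
      funext m
      have e1 : (-(x*(q:ℂ)^(m+1)))^(n+1) = (-x)^(n+1) * ((q:ℂ)^(n+1))^(m+1) := by
        rw [← neg_mul, mul_pow, ← pow_mul, ← pow_mul, Nat.mul_comm]
      have e2 : (-(x⁻¹*(q:ℂ)^(m+1)))^(n+1) = (-x⁻¹)^(n+1) * ((q:ℂ)^(n+1))^(m+1) := by
        rw [← neg_mul, mul_pow, ← pow_mul, ← pow_mul, Nat.mul_comm]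
      rw [hF_def]
      simp only [e1, e2]
      ring
    have hval : 2*((-x)^(n+1) - (-x⁻¹)^(n+1)) * ((q:ℂ)^(n+1) * (1-(q:ℂ)^(n+1))⁻¹)
        = 2 * w n := by
      have hz : x ^ (-((n:ℤ)+1)) = (x⁻¹)^(n+1) := by
        rw [inv_pow, ← zpow_natCast x (n+1), ← zpow_neg]
        norm_cast
      rw [hw_def]
      simp only [hz]
      rw [neg_pow, neg_pow (x⁻¹), neg_pow (q:ℂ), div_eq_mul_inv]
      ring
    rw [hfun] at hg
    rw [hval] at hg
    exact hg
  -- fiberwise summation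
  have hS4 : HasSum (fun m => d (m+1) + e m) (∑' p : ℕ × ℕ, F p) :=
    hFsummable.hasSum.prod_fiberwise hrow
  have hS5 : HasSum (fun n => 2 * w n) (∑' p : ℕ × ℕ, F p) := by
    have hGsum : Summable (fun p : ℕ × ℕ => F p.swap) := hFsummable.prod_symm
    have h0 : HasSum (fun n => 2 * w n) (∑' p : ℕ × ℕ, F p.swap) :=
      hGsum.hasSum.prod_fiberwise (fun n => hcol n)
    have heq : (∑' p : ℕ × ℕ, F p.swap) = ∑' p : ℕ × ℕ, F p :=
      (Equiv.prodComm ℕ ℕ).tsum_eq F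
    rwa [heq] at h0
  set S : ℂ := ∑' p : ℕ × ℕ, F p with hS_def
  -- summability of w
  have hw_summable : Summable w := by
    have h2w : Summable (fun n => (2 * w n) / 2) := hS5.summable.div_const 2
    apply h2w.congr
    intro n
    rw [mul_div_cancel_left₀ _ (two_ne_zero)]
  -- summability of shifted d and of e
  have hXq0 : (0:ℝ) < 1 - X*q := by linarith
  have hXmq : (0:ℝ) < X - q := by linarith
  have hd_shift : Summable (fun m : ℕ => d (m+1)) := by
    apply Summable.of_norm
    apply Summable.of_nonneg_of_le (fun m => norm_nonneg _) _
      (hgeoq.mul_left (2*X*q*(1-X*q)⁻¹))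
    intro m
    have hlow : 1 - X*q ≤ ‖(1:ℂ)+x*(q:ℂ)^(m+1)‖ := by
      have h0 := norm_sub_norm_le (1:ℂ) (-(x*(q:ℂ)^(m+1)))
      rw [sub_neg_eq_add, norm_one, norm_neg, norm_mul, Complex.norm_eq_abs,
        Complex.norm_eq_abs, hQabs] at h0
      have : X * q^(m+1) ≤ X * q :=
        mul_le_mul_of_nonneg_left (hqpow (m+1) (Nat.le_add_left 1 m)) (le_of_lt hX0)
      linarith
    have hpos : (0:ℝ) < ‖(1:ℂ)+x*(q:ℂ)^(m+1)‖ := lt_of_lt_of_le hXq0 hlow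
    have hnorm : ‖d (m+1)‖ = 2 * X * q^(m+1) * ‖(1:ℂ)+x*(q:ℂ)^(m+1)‖⁻¹ := by
      rw [hd_def]
      simp only [norm_mul, norm_inv]
      rw [Complex.norm_eq_abs x, ← hX_def, Complex.norm_eq_abs ((q:ℂ)^(m+1)), hQabs]
      norm_num
    rw [hnorm]
    calc 2 * X * q^(m+1) * ‖(1:ℂ)+x*(q:ℂ)^(m+1)‖⁻¹
        ≤ 2 * X * q^(m+1) * (1-X*q)⁻¹ :=
          mul_le_mul_of_nonneg_left (inv_anti₀ hXq0 hlow) (by positivity)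
      _ = 2*X*q*(1-X*q)⁻¹ * q^m := by ring
  have he_sum : Summable e := by
    apply Summable.of_norm
    apply Summable.of_nonneg_of_le (fun m => norm_nonneg _) _
      (hgeoq.mul_left (2*q*(X-q)⁻¹))
    intro m
    have hlow : X - q ≤ ‖x+(q:ℂ)^(m+1)‖ := by
      have h0 := norm_sub_norm_le x (-((q:ℂ)^(m+1)))
      rw [sub_neg_eq_add, norm_neg, Complex.norm_eq_abs, Complex.norm_eq_abs, hQabs] at h0
      have : q^(m+1) ≤ q := hqpow (m+1) (Nat.le_add_left 1 m)
      rw [← hX_def] at h0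
      linarith
    have hpos : (0:ℝ) < ‖x+(q:ℂ)^(m+1)‖ := lt_of_lt_of_le hXmq hlow
    have hnorm : ‖e m‖ = 2 * q^(m+1) * ‖x+(q:ℂ)^(m+1)‖⁻¹ := by
      rw [he_def]
      simp only [norm_mul, norm_inv]
      rw [Complex.norm_eq_abs ((q:ℂ)^(m+1)), hQabs]
      norm_num
    rw [hnorm]
    calc 2 * q^(m+1) * ‖x+(q:ℂ)^(m+1)‖⁻¹ ≤ 2 * q^(m+1) * (X-q)⁻¹ :=
          mul_le_mul_of_nonneg_left (inv_anti₀ hXmq hlow) (by positivity)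
      _ = 2*q*(X-q)⁻¹ * q^m := by ring
  have hDE : (∑' m : ℕ, d (m+1)) + (∑' m : ℕ, e m) = S :=
    HasSum.unique (hd_shift.hasSum.add he_sum.hasSum) hS4
  have hd_full : HasSum d ((∑' m : ℕ, d (m+1)) + d 0) := by
    have h0 := (hasSum_nat_add_iff (f := d) 1).1 hd_shift.hasSum
    simpa using h0
  have hde : HasSum (fun k => d k + e k) ((∑' m : ℕ, d (m+1)) + d 0 + ∑' m : ℕ, e m) :=
    hd_full.add he_sum.hasSum
  -- identify 2x * (logarithmic derivative series) with d + e
  have hterm : (fun k : ℕ => 2*x*(-((q:ℂ)^k) / (1 - (-x)*(q:ℂ)^k)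
      + ((q:ℂ) * ((-x)^2)⁻¹ * (q:ℂ)^k) / (1 - (q:ℂ) * (-x)⁻¹ * (q:ℂ)^k)))
      = fun k => d k + e k := by
    funext k
    have n1 := hden1 k
    have n3 := hden2 k
    have k1 : (1:ℂ) - (-x)*(q:ℂ)^k = 1 + x*(q:ℂ)^k := by ring
    have k2 : (1:ℂ) - (q:ℂ)*(-x)⁻¹*(q:ℂ)^k = x⁻¹ * (x + (q:ℂ)^(k+1)) := by
      rw [inv_neg]; field_simp; ring
    have k3 : ((-x)^2 : ℂ) = x^2 := by ring
    rw [k1, k2, k3, hd_def, he_def]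
    rw [div_eq_mul_inv _ (x⁻¹ * (x + (q:ℂ)^(k+1))), mul_inv, inv_inv, div_eq_mul_inv]
    field_simp
    ring
  have h2xL := hsum.mul_left (2*x)
  rw [hterm] at h2xL
  have hkey : 2*x*(deriv (theta q) (-x) / theta q (-x)) = S + d 0 := by
    have h0 := HasSum.unique h2xL hde
    rw [h0, ← hDE]
    ring
  constructor
  · exact hw_summable
  · have hS2w : S = 2 * ∑' n, w n := by
      rw [← hS5.tsum_eq, tsum_mul_left]
    rw [mul_div_assoc, hkey, hS2w]
    have hd0 : d 0 = (-2)*x*(1+x)⁻¹ := by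
      rw [hd_def]; simp
    rw [hd0]
    field_simp
    ring
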